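/- Let V be a finite set, let W₀ be an n×n real symmetric positive definite matrix, and for each s ∈ V let W_s be an n×n real symmetric positive semidefinite matrix. For S ⊆ V define W_S = W₀ + Σ_{s∈S} W_s. Then the set function f : 2^V → ℝ defined by f(S) = log det(W_S) is submodular and monotone increasing. -/

import Mathlib

open Matrix
open scoped MatrixOrder

section Aux

variable {n : ℕ}

private lemma one_le_det_one_add {R : Matrix (Fin n) (Fin n) ℝ}
    (hR : R.PosSemidef) : 1 ≤ (1 + R).det := by
  have hH : R.IsHermitian := hR.isHermitian
  set U : Matrix (Fin n) (Fin n) ℝ := (hH.eigenvectorUnitary : Matrix (Fin n) (Fin n) ℝ) with hUdef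
  have hU : U * star U = 1 := Matrix.mem_unitaryGroup_iff.mp hH.eigenvectorUnitary.2
  set g : Fin n → ℝ := RCLike.ofReal ∘ hH.eigenvalues with hgdef
  have h1 : (1 + R) = U * (1 + diagonal g) * star U := by
    rw [Matrix.mul_add, Matrix.add_mul, mul_one, hU]
    congr 1
    exact hH.spectral_theorem
  have e : (1 + R).det = (1 + diagonal g).det := by
    rw [h1, det_mul, det_mul]
    calc U.det * (1 + diagonal g).det * (star U).det
        = (1 + diagonal g).det * (U.det * (star U).det) := by ring
      _ = (1 + diagonal g).det := by rw [← det_mul, hU, det_one, mul_one]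
  rw [e, ← diagonal_one, diagonal_add, det_diagonal]
  calc (1 : ℝ) = ∏ _i : Fin n, 1 := by simp
    _ ≤ ∏ i, (1 + g) i := by
        refine Finset.prod_le_prod (fun i _ => by norm_num) (fun i _ => ?_)
        have h0 : (0 : ℝ) ≤ hH.eigenvalues i := hR.eigenvalues_nonneg i
        have hg : g i = hH.eigenvalues i := by simp [hgdef]
        simp only [Pi.add_apply, Pi.one_apply, hg]
        linarith

private lemma det_le_det_add {M P : Matrix (Fin n) (Fin n) ℝ}
    (hM : M.PosDef) (hP : P.PosSemidef) : M.det ≤ (M + P).det := by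
  obtain ⟨S, hSps, hSS, hSH, hSdet⟩ :
      ∃ S : Matrix (Fin n) (Fin n) ℝ, S.PosSemidef ∧ S * S = M ∧ S.IsHermitian ∧
        IsUnit S.det := by
    refine ⟨CFC.sqrt M, (CFC.sqrt_nonneg M).posSemidef,
      CFC.sqrt_mul_sqrt_self M hM.posSemidef.nonneg, (CFC.sqrt_nonneg M).posSemidef.isHermitian, ?_⟩
    have : (CFC.sqrt M).det * (CFC.sqrt M).det = M.det := by
      rw [← det_mul, CFC.sqrt_mul_sqrt_self M hM.posSemidef.nonneg]
    have hMd := hM.det_pos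
    refine isUnit_iff_ne_zero.mpr fun h => ?_
    rw [h, mul_zero] at this
    exact absurd this.symm (ne_of_gt hMd)
  have hinv1 : S * S⁻¹ = 1 := Matrix.mul_nonsing_inv S hSdet
  have hinv2 : S⁻¹ * S = 1 := Matrix.nonsing_inv_mul S hSdet
  have hSinvH : (S⁻¹).IsHermitian := hSH.inv
  have hP' : (S⁻¹ * P * S⁻¹).PosSemidef := by
    have := hP.conjTranspose_mul_mul_same S⁻¹
    rwa [hSinvH.eq] at this
  have hMP : M + P = S * (1 + S⁻¹ * P * S⁻¹) * S := by
    rw [Matrix.mul_add, Matrix.add_mul, mul_one, hSS]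
    congr 1
    symm
    calc S * (S⁻¹ * P * S⁻¹) * S = (S * S⁻¹) * P * (S⁻¹ * S) := by
          simp only [Matrix.mul_assoc]
      _ = P := by rw [hinv1, hinv2, one_mul, mul_one]
  have hdd : (M + P).det = M.det * (1 + S⁻¹ * P * S⁻¹).det := by
    rw [hMP, det_mul, det_mul, ← hSS, det_mul]
    ring
  rw [hdd]
  nlinarith [one_le_det_one_add hP', hM.det_pos]

private lemma det_one_add_add_le {X Y : Matrix (Fin n) (Fin n) ℝ}
    (hX : X.PosSemidef) (hY : Y.PosSemidef) :
    (1 + X + Y).det ≤ (1 + X).det * (1 + Y).det := by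
  have hA : (1 + X : Matrix (Fin n) (Fin n) ℝ).PosDef :=
    Matrix.PosDef.one.add_posSemidef hX
  set A : Matrix (Fin n) (Fin n) ℝ := 1 + X with hAdef
  have hAdet : IsUnit A.det := isUnit_iff_ne_zero.mpr (ne_of_gt hA.det_pos)
  have hinv1 : A * A⁻¹ = 1 := Matrix.mul_nonsing_inv A hAdet
  have hinv2 : A⁻¹ * A = 1 := Matrix.nonsing_inv_mul A hAdet
  have hAinvH : (A⁻¹).IsHermitian := hA.isHermitian.inv
  -- T = sqrt Y
  set T : Matrix (Fin n) (Fin n) ℝ := CFC.sqrt Y with hTdef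
  have hTps : T.PosSemidef := (CFC.sqrt_nonneg Y).posSemidef
  have hTT : T * T = Y := CFC.sqrt_mul_sqrt_self Y hY.nonneg
  have hTH : T.IsHermitian := hTps.isHermitian
  -- step 1 : det (1 + X + Y) = det A * det (1 + T * A⁻¹ * T)
  have hsplit : 1 + X + Y = A * (1 + A⁻¹ * Y) := by
    rw [Matrix.mul_add, mul_one, ← Matrix.mul_assoc, hinv1, one_mul, hAdef]
  have hcomm : (1 + A⁻¹ * Y).det = (1 + T * A⁻¹ * T).det := by
    have h1 : 1 + A⁻¹ * Y = 1 + (A⁻¹ * T) * T := by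
      rw [Matrix.mul_assoc, hTT]
    have h2 : (1 + (A⁻¹ * T) * T).det = (1 + T * (A⁻¹ * T)).det :=
      Matrix.det_one_add_mul_comm _ _
    rw [h1, h2, Matrix.mul_assoc]
  -- R = T * A⁻¹ * T is psd
  have hAinvPsd : (A⁻¹).PosSemidef := by
    have h := hA.posSemidef.conjTranspose_mul_mul_same A⁻¹
    rwa [hAinvH.eq, Matrix.mul_assoc, hinv1, mul_one] at h
  have hR : (T * A⁻¹ * T).PosSemidef := by
    have := hAinvPsd.conjTranspose_mul_mul_same T
    rwa [hTH.eq] at this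
  -- 1 - A⁻¹ is psd : 1 - A⁻¹ = A⁻¹ * X * A⁻¹ + A⁻¹ * (X * X) * A⁻¹
  have hone_sub : 1 - A⁻¹ = A⁻¹ * X * A⁻¹ + A⁻¹ * (X * X) * A⁻¹ := by
    have hXA : (X + X * X) * A⁻¹ = X := by
      have : X + X * X = X * A := by rw [hAdef, Matrix.mul_add, mul_one]
      rw [this, Matrix.mul_assoc, hinv1, mul_one]
    calc 1 - A⁻¹ = A⁻¹ * A - A⁻¹ * 1 := by rw [hinv2, mul_one]
      _ = A⁻¹ * (A - 1) := by rw [Matrix.mul_sub]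
      _ = A⁻¹ * X := by rw [hAdef]; congr 1; abel
      _ = A⁻¹ * ((X + X * X) * A⁻¹) := by rw [hXA]
      _ = A⁻¹ * X * A⁻¹ + A⁻¹ * (X * X) * A⁻¹ := by
          rw [Matrix.add_mul, Matrix.mul_add]
          simp only [Matrix.mul_assoc]
  have hXX : (X * X).PosSemidef := by
    have := Matrix.posSemidef_conjTranspose_mul_self X
    rwa [hX.isHermitian.eq] at this
  have hone_sub_psd : (1 - A⁻¹ : Matrix (Fin n) (Fin n) ℝ).PosSemidef := by
    rw [hone_sub]
    have h1 := hX.conjTranspose_mul_mul_same A⁻¹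
    have h2 := hXX.conjTranspose_mul_mul_same A⁻¹
    rw [hAinvH.eq] at h1 h2
    exact h1.add h2
  -- Y - R psd
  have hYR : Y - T * A⁻¹ * T = T * (1 - A⁻¹) * T := by
    rw [Matrix.mul_sub, Matrix.sub_mul, mul_one, hTT]
  have hYRpsd : (Y - T * A⁻¹ * T).PosSemidef := by
    rw [hYR]
    have := hone_sub_psd.conjTranspose_mul_mul_same T
    rwa [hTH.eq] at this
  -- det (1 + R) ≤ det (1 + Y)
  have hkey : (1 + T * A⁻¹ * T).det ≤ (1 + Y).det := by
    have h1 : (1 + T * A⁻¹ * T : Matrix (Fin n) (Fin n) ℝ).PosDef :=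
      Matrix.PosDef.one.add_posSemidef hR
    have := det_le_det_add h1 hYRpsd
    have he : 1 + T * A⁻¹ * T + (Y - T * A⁻¹ * T) = 1 + Y := by abel
    rwa [he] at this
  calc (1 + X + Y).det = A.det * (1 + T * A⁻¹ * T).det := by
        rw [hsplit, det_mul, hcomm]
    _ ≤ A.det * (1 + Y).det := by
        have := hA.det_pos
        nlinarith
    _ = (1 + X).det * (1 + Y).det := by rw [hAdef]

private lemma det_submodular {M D P : Matrix (Fin n) (Fin n) ℝ}
    (hM : M.PosDef) (hD : D.PosSemidef) (hP : P.PosSemidef) :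
    (M + D + P).det * M.det ≤ (M + P).det * (M + D).det := by
  obtain ⟨S, hSps, hSS, hSH, hSdet⟩ :
      ∃ S : Matrix (Fin n) (Fin n) ℝ, S.PosSemidef ∧ S * S = M ∧ S.IsHermitian ∧
        IsUnit S.det := by
    refine ⟨CFC.sqrt M, (CFC.sqrt_nonneg M).posSemidef,
      CFC.sqrt_mul_sqrt_self M hM.posSemidef.nonneg, (CFC.sqrt_nonneg M).posSemidef.isHermitian, ?_⟩
    have : (CFC.sqrt M).det * (CFC.sqrt M).det = M.det := by
      rw [← det_mul, CFC.sqrt_mul_sqrt_self M hM.posSemidef.nonneg]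
    have hMd := hM.det_pos
    refine isUnit_iff_ne_zero.mpr fun h => ?_
    rw [h, mul_zero] at this
    exact absurd this.symm (ne_of_gt hMd)
  have hinv1 : S * S⁻¹ = 1 := Matrix.mul_nonsing_inv S hSdet
  have hinv2 : S⁻¹ * S = 1 := Matrix.nonsing_inv_mul S hSdet
  have hSinvH : (S⁻¹).IsHermitian := hSH.inv
  have hpsd' : ∀ {Z : Matrix (Fin n) (Fin n) ℝ}, Z.PosSemidef →
      (S⁻¹ * Z * S⁻¹).PosSemidef := by
    intro Z hZ
    have := hZ.conjTranspose_mul_mul_same S⁻¹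
    rwa [hSinvH.eq] at this
  have hMZ : ∀ Z : Matrix (Fin n) (Fin n) ℝ,
      (M + Z).det = M.det * (1 + S⁻¹ * Z * S⁻¹).det := by
    intro Z
    have hMP : M + Z = S * (1 + S⁻¹ * Z * S⁻¹) * S := by
      rw [Matrix.mul_add, Matrix.add_mul, mul_one, hSS]
      congr 1
      symm
      calc S * (S⁻¹ * Z * S⁻¹) * S = (S * S⁻¹) * Z * (S⁻¹ * S) := by
            simp only [Matrix.mul_assoc]
        _ = Z := by rw [hinv1, hinv2, one_mul, mul_one]
    rw [hMP, det_mul, det_mul, ← hSS, det_mul]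
    ring
  have hDP : S⁻¹ * (D + P) * S⁻¹ = S⁻¹ * D * S⁻¹ + S⁻¹ * P * S⁻¹ := by
    rw [Matrix.mul_add, Matrix.add_mul]
  have h1 : (M + D + P).det = M.det * (1 + (S⁻¹ * D * S⁻¹ + S⁻¹ * P * S⁻¹)).det := by
    rw [add_assoc, hMZ (D + P), hDP]
  have h2 := hMZ D
  have h3 := hMZ P
  have hkey : (1 + (S⁻¹ * D * S⁻¹ + S⁻¹ * P * S⁻¹)).det ≤
      (1 + S⁻¹ * D * S⁻¹).det * (1 + S⁻¹ * P * S⁻¹).det := by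
    have := det_one_add_add_le (hpsd' hD) (hpsd' hP)
    rwa [add_assoc] at this
  have hMd := hM.det_pos
  rw [h1, h2, h3]
  nlinarith [mul_le_mul_of_nonneg_left hkey (mul_nonneg hMd.le hMd.le)]

end Aux

/-- The log determinant of the controllability Gramian `W_S = W₀ + ∑_{s ∈ S} W_s`
is a submodular and monotone increasing set function of the actuator set `S`. -/
theorem logdet_gramian_submodular_monotone
    {V : Type*} [Fintype V] [DecidableEq V] {n : ℕ}
    (W₀ : Matrix (Fin n) (Fin n) ℝ) (hW₀ : W₀.PosDef)
    (W : V → Matrix (Fin n) (Fin n) ℝ) (hW : ∀ s : V, (W s).PosSemidef)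
    (f : Finset V → ℝ)
    (hf : ∀ S : Finset V, f S = Real.log (W₀ + ∑ s ∈ S, W s).det) :
    (∀ A B : Finset V, A ⊆ B → ∀ s : V, s ∉ B →
      f (insert s A) - f A ≥ f (insert s B) - f B) ∧
    (∀ A B : Finset V, A ⊆ B → f A ≤ f B) := by
  have hsum : ∀ S : Finset V, (∑ s ∈ S, W s).PosSemidef := by
    intro S
    exact Finset.sum_induction W Matrix.PosSemidef
      (fun a b ha hb => ha.add hb) Matrix.PosSemidef.zero (fun s _ => hW s)
  have hpd : ∀ S : Finset V, (W₀ + ∑ s ∈ S, W s).PosDef := fun S =>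
    hW₀.add_posSemidef (hsum S)
  constructor
  · intro A B hAB s hsB
    have hsA : s ∉ A := fun h => hsB (hAB h)
    set M : Matrix (Fin n) (Fin n) ℝ := W₀ + ∑ a ∈ A, W a with hMdef
    set D : Matrix (Fin n) (Fin n) ℝ := ∑ b ∈ B \ A, W b with hDdef
    set P : Matrix (Fin n) (Fin n) ℝ := W s with hPdef
    have hMpd : M.PosDef := hpd A
    have hDpsd : D.PosSemidef := hsum (B \ A)
    have hPpsd : P.PosSemidef := hW s
    have hB : W₀ + ∑ b ∈ B, W b = M + D := by
      rw [hMdef, hDdef, ← Finset.sum_sdiff hAB]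
      abel
    have hiA : W₀ + ∑ a ∈ insert s A, W a = M + P := by
      rw [Finset.sum_insert hsA, hMdef, hPdef]
      abel
    have hiB : W₀ + ∑ b ∈ insert s B, W b = M + D + P := by
      rw [Finset.sum_insert hsB, ← Finset.sum_sdiff hAB, hMdef, hDdef, hPdef]
      abel
    have hdet := det_submodular hMpd hDpsd hPpsd
    have h1 : (0 : ℝ) < M.det := hMpd.det_pos
    have h2 : (0 : ℝ) < (M + D).det := (hMpd.add_posSemidef hDpsd).det_pos
    have h3 : (0 : ℝ) < (M + P).det := (hMpd.add_posSemidef hPpsd).det_pos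
    have h4 : (0 : ℝ) < (M + D + P).det :=
      ((hMpd.add_posSemidef hDpsd).add_posSemidef hPpsd).det_pos
    rw [hf (insert s A), hf A, hf (insert s B), hf B, hiA, hiB, hB, hMdef.symm]
    have hlog : Real.log ((M + D + P).det * M.det) ≤
        Real.log ((M + P).det * (M + D).det) :=
      Real.log_le_log (by positivity) hdet
    rw [Real.log_mul (ne_of_gt h4) (ne_of_gt h1),
      Real.log_mul (ne_of_gt h3) (ne_of_gt h2)] at hlog
    linarith
  · intro A B hAB
    have hB : W₀ + ∑ b ∈ B, W b = (W₀ + ∑ a ∈ A, W a) + ∑ b ∈ B \ A, W b := by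
      rw [← Finset.sum_sdiff hAB]
      abel
    rw [hf A, hf B, hB]
    have h1 := (hpd A).det_pos
    have h2 := det_le_det_add (hpd A) (hsum (B \ A))
    exact Real.log_le_log h1 h2
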